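/- Let ξ be an F_T-measurable random variable. Then B^{2,0}(ξ) ≠ ∅ if and only if there exists a probability measure Q equivalent to P such that E_Q[|ξ|] < ∞ and B^{2,1}_Q(ξ) ≠ ∅; that is, ξ admits a representation ∫₀^T β_u du = ξ a.s. with ∫₀^T β_u² du < ∞ a.s. if and only if it admits such a representation with E_Q[∫₀^T β_u² du] < ∞ under some equivalent probability Q integrating ξ. -/

import Mathlib

open MeasureTheory Filter Set
open scoped ENNReal Topology


lemma prod_mono_right {α β : Type*} {m : MeasurableSpace α} {m1 m2 : MeasurableSpace β}
    (h : m1 ≤ m2) : m.prod m1 ≤ m.prod m2 :=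
  sup_le_sup_left (MeasurableSpace.comap_mono h) _

lemma measL {Ω : Type*} {mΩ : MeasurableSpace Ω} (ℱ : Filtration ℝ mΩ) (T : ℝ)
    (β : ℝ → Ω → ℝ) (hβ : ProgMeasurable ℱ β) :
    Measurable fun ω => ∫⁻ u in Set.Ioc (0:ℝ) T, ENNReal.ofReal ((β u ω)^2) := by
  set G : ℝ → Ω → ℝ≥0∞ := fun u ω => ENNReal.ofReal ((β (min u T) ω)^2) with hG
  have hmapmeas : Measurable fun p : ℝ × Ω => ((⟨min p.1 T, by simp⟩ : Set.Iic T), p.2) :=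
    ((measurable_fst.min measurable_const).subtype_mk).prodMk measurable_snd
  have hβT : Measurable fun p : Set.Iic T × Ω => β p.1 p.2 :=
    ((hβ T).mono (prod_mono_right (ℱ.le T))).measurable
  have hGmeas : Measurable (Function.uncurry G) := by
    have : Function.uncurry G = (fun x : ℝ => ENNReal.ofReal (x^2)) ∘
        ((fun p : Set.Iic T × Ω => β p.1 p.2) ∘
          fun p : ℝ × Ω => ((⟨min p.1 T, by simp⟩ : Set.Iic T), p.2)) := rfl
    rw [this]
    exact (ENNReal.measurable_ofReal.comp ((measurable_id.pow_const 2))).comp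
      (hβT.comp hmapmeas)
  have key : ∀ ω, (∫⁻ u in Set.Ioc (0:ℝ) T, ENNReal.ofReal ((β u ω)^2))
      = ∫⁻ u in Set.Ioc (0:ℝ) T, G u ω := by
    intro ω
    refine setLIntegral_congr_fun measurableSet_Ioc (fun u hu => ?_)
    simp [hG, min_eq_left hu.2]
  simp only [key]
  exact Measurable.lintegral_prod_left hGmeas

/-- `β ∈ B^{2,0}(ξ)` (under `μ`) : `β` is progressively measurable,
`∫₀^T β_u² du < ∞` a.s., and `∫₀^T β_u du = ξ` almost surely. -/
def MemB20 {Ω : Type*} {mΩ : MeasurableSpace Ω} (μ : Measure Ω) (ℱ : Filtration ℝ mΩ)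
    (T : ℝ) (ξ : Ω → ℝ) (β : ℝ → Ω → ℝ) : Prop :=
  ProgMeasurable ℱ β ∧
  (∀ᵐ ω ∂μ, (∫⁻ u in Set.Ioc (0:ℝ) T, ENNReal.ofReal ((β u ω)^2)) < ⊤) ∧
  ∀ᵐ ω ∂μ, ∫ u in Set.Ioc (0:ℝ) T, β u ω = ξ ω

/-- `β ∈ B^{2,1}_Q(ξ)` : `β` is progressively measurable, `E_Q[∫₀^T β_u² du] < ∞`,
and `∫₀^T β_u du = ξ` `Q`-almost surely. -/
def MemB21 {Ω : Type*} {mΩ : MeasurableSpace Ω} (Q : Measure Ω) (ℱ : Filtration ℝ mΩ)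
    (T : ℝ) (ξ : Ω → ℝ) (β : ℝ → Ω → ℝ) : Prop :=
  ProgMeasurable ℱ β ∧
  (∫⁻ ω, (∫⁻ u in Set.Ioc (0:ℝ) T, ENNReal.ofReal ((β u ω)^2)) ∂Q) < ⊤ ∧
  ∀ᵐ ω ∂Q, ∫ u in Set.Ioc (0:ℝ) T, β u ω = ξ ω

theorem stmt4
    {Ω : Type*} {mΩ : MeasurableSpace Ω} (μ : Measure Ω) [IsProbabilityMeasure μ]
    (ℱ : Filtration ℝ mΩ) (T : ℝ) (hT : 0 < T)
    (ξ : Ω → ℝ) (hξ_meas : StronglyMeasurable[ℱ T] ξ) :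
    (∃ β, MemB20 μ ℱ T ξ β) ↔
      ∃ Q : Measure Ω, IsProbabilityMeasure Q ∧ Q ≪ μ ∧ μ ≪ Q ∧
        Integrable ξ Q ∧ ∃ β, MemB21 Q ℱ T ξ β := by
  simp only [MemB20, MemB21]
  constructor
  · rintro ⟨β, hprog, hfin, heq⟩
    set L : Ω → ℝ≥0∞ := fun ω => ∫⁻ u in Set.Ioc (0:ℝ) T, ENNReal.ofReal ((β u ω)^2) with hLdef
    have hL : Measurable L := measL ℱ T β hprog
    have ξm : Measurable ξ := (hξ_meas.mono (ℱ.le T)).measurable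
    set D : Ω → ℝ := fun ω => 1 + |ξ ω| + (L ω).toReal with hDdef
    have hD1 : ∀ ω, 1 ≤ D ω := fun ω => by
      have := abs_nonneg (ξ ω); have := ENNReal.toReal_nonneg (a := L ω)
      simp only [hDdef]; linarith
    have hDpos : ∀ ω, 0 < D ω := fun ω => lt_of_lt_of_le one_pos (hD1 ω)
    set f : Ω → ℝ≥0∞ := fun ω => ENNReal.ofReal (D ω)⁻¹ with hfdef
    have hf_meas : Measurable f := by
      apply ENNReal.measurable_ofReal.comp
      exact ((measurable_const.add ξm.abs).add hL.ennreal_toReal).inv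
    have hf_le_one : ∀ ω, f ω ≤ 1 := fun ω => by
      rw [show (1:ℝ≥0∞) = ENNReal.ofReal 1 by simp]
      exact ENNReal.ofReal_le_ofReal (by
        rw [inv_le_one_iff₀]; right; exact hD1 ω)
    have hf_pos : ∀ ω, 0 < f ω := fun ω =>
      ENNReal.ofReal_pos.2 (inv_pos.2 (hDpos ω))
    set c : ℝ≥0∞ := ∫⁻ ω, f ω ∂μ with hcdef
    have hc_le : c ≤ 1 := by
      calc c ≤ ∫⁻ _, 1 ∂μ := lintegral_mono hf_le_one
      _ = 1 := by simp
    have hc_ne_top : c ≠ ⊤ := (lt_of_le_of_lt hc_le ENNReal.one_lt_top).ne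
    have hc_ne_zero : c ≠ 0 := by
      intro h0
      have hf0 : ∀ᵐ ω ∂μ, f ω = 0 := (lintegral_eq_zero_iff hf_meas).mp h0
      have : ∀ᵐ _ω ∂μ, False := hf0.mono fun ω h => (hf_pos ω).ne' h
      rw [ae_iff] at this
      simp at this
    set Q : Measure Ω := c⁻¹ • μ.withDensity f with hQdef
    have hQapp : ∀ s : Set Ω, MeasurableSet s → Q s = c⁻¹ * ∫⁻ ω in s, f ω ∂μ := by
      intro s hs
      rw [hQdef, Measure.smul_apply, withDensity_apply f hs, smul_eq_mul]
    have hQprob : IsProbabilityMeasure Q := by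
      constructor
      rw [hQapp univ MeasurableSet.univ, setLIntegral_univ, ← hcdef,
        ENNReal.inv_mul_cancel hc_ne_zero hc_ne_top]
    have hQμ : Q ≪ μ := by
      refine Measure.AbsolutelyContinuous.mk fun s hs h0 => ?_
      rw [hQapp s hs]
      rw [setLIntegral_measure_zero s f h0]
      simp
    have hμQ : μ ≪ Q := by
      refine Measure.AbsolutelyContinuous.mk fun s hs h0 => ?_
      rw [hQapp s hs] at h0
      have hcinv_ne : c⁻¹ ≠ 0 := ENNReal.inv_ne_zero.2 hc_ne_top
      have h1 : ∫⁻ ω in s, f ω ∂μ = 0 := by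
        rcases mul_eq_zero.1 h0 with h | h
        · exact absurd h hcinv_ne
        · exact h
      have hf0 : ∀ᵐ ω ∂μ.restrict s, f ω = 0 :=
        (lintegral_eq_zero_iff hf_meas).mp h1
      have : ∀ᵐ _ω ∂μ.restrict s, False := hf0.mono fun ω h => (hf_pos ω).ne' h
      rw [ae_iff] at this
      simpa [Measure.restrict_apply_univ] using this
    have hlintQ : ∀ g : Ω → ℝ≥0∞, Measurable g →
        ∫⁻ ω, g ω ∂Q = c⁻¹ * ∫⁻ ω, f ω * g ω ∂μ := by
      intro g hg
      rw [hQdef, lintegral_smul_measure, lintegral_withDensity_eq_lintegral_mul _ hf_meas hg]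
      rfl
    have habs_le : ∀ ω, |ξ ω| ≤ D ω := fun ω => by
      have := ENNReal.toReal_nonneg (a := L ω)
      simp only [hDdef]; linarith
    refine ⟨Q, hQprob, hQμ, hμQ, ?_, β, hprog, ?_, hQμ.ae_le heq⟩
    · -- Integrable ξ Q
      refine ⟨ξm.aestronglyMeasurable, ?_⟩
      rw [HasFiniteIntegral]
      have hmeas : Measurable fun ω => (‖ξ ω‖₊ : ℝ≥0∞) := ξm.nnnorm.coe_nnreal_ennreal
      rw [show (∫⁻ a, ‖ξ a‖ₑ ∂Q) = ∫⁻ ω, (‖ξ ω‖₊ : ℝ≥0∞) ∂Q from rfl, hlintQ _ hmeas]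
      have hb : ∀ ω, f ω * (‖ξ ω‖₊ : ℝ≥0∞) ≤ 1 := fun ω => by
        rw [show ((‖ξ ω‖₊ : ℝ≥0∞)) = ENNReal.ofReal |ξ ω| from Real.enorm_eq_ofReal_abs _,
          hfdef, ← ENNReal.ofReal_mul (inv_nonneg.2 (hDpos ω).le),
          show (1:ℝ≥0∞) = ENNReal.ofReal 1 by simp]
        refine ENNReal.ofReal_le_ofReal ?_
        rw [← div_eq_inv_mul, div_le_one (hDpos ω)]
        exact habs_le ω
      have : ∫⁻ ω, f ω * (‖ξ ω‖₊ : ℝ≥0∞) ∂μ ≤ 1 := by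
        calc _ ≤ ∫⁻ _, 1 ∂μ := lintegral_mono hb
        _ = 1 := by simp
      calc c⁻¹ * ∫⁻ ω, f ω * (‖ξ ω‖₊ : ℝ≥0∞) ∂μ ≤ c⁻¹ * 1 :=
            mul_le_mul_right this _
      _ < ⊤ := by
            rw [mul_one]
            exact ENNReal.inv_lt_top.2 (pos_iff_ne_zero.2 hc_ne_zero)
    · -- E_Q[L] < ∞
      rw [show (fun ω => ∫⁻ u in Set.Ioc (0:ℝ) T, ENNReal.ofReal ((β u ω)^2)) = L from rfl] at *
      rw [hlintQ L hL]
      have hb : ∀ᵐ ω ∂μ, f ω * L ω ≤ 1 := by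
        refine hfin.mono fun ω hω => ?_
        rw [show L ω = ENNReal.ofReal (L ω).toReal from (ENNReal.ofReal_toReal hω.ne).symm,
          hfdef, ← ENNReal.ofReal_mul (inv_nonneg.2 (hDpos ω).le),
          show (1:ℝ≥0∞) = ENNReal.ofReal 1 by simp]
        refine ENNReal.ofReal_le_ofReal ?_
        rw [← div_eq_inv_mul, div_le_one (hDpos ω)]
        have := abs_nonneg (ξ ω)
        simp only [hDdef]; linarith
      have : ∫⁻ ω, f ω * L ω ∂μ ≤ 1 := by
        calc _ ≤ ∫⁻ _, 1 ∂μ := lintegral_mono_ae hb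
        _ = 1 := by simp
      calc c⁻¹ * ∫⁻ ω, f ω * L ω ∂μ ≤ c⁻¹ * 1 := mul_le_mul_right this _
      _ < ⊤ := by
            rw [mul_one]
            exact ENNReal.inv_lt_top.2 (pos_iff_ne_zero.2 hc_ne_zero)
  · rintro ⟨Q, hQprob, hQμ, hμQ, hint, β, hprog, hfin, heq⟩
    refine ⟨β, hprog, ?_, hμQ.ae_le heq⟩
    have := ae_lt_top (measL ℱ T β hprog) hfin.ne
    exact hμQ.ae_le this
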